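/- arXiv:2007.11041 — 3 statements merged into one kernel-verified Lean document; each statement's English description precedes it below -/
import Mathlib

section
/- For every integer n ≥ 1 and all real numbers a ≤ b, |∫_a^b |err(x)|^n dx − ((b − a)/(n+1)) · δ^n| ≤ (4/(n+1)) · δ^{n+1}. -/
open MeasureTheory

lemma tri_low (u : ℝ) (h0 : 0 ≤ u) (h1 : u ≤ 1/2) : |u - round u| = u := by
  rcases lt_or_eq_of_le h1 with h | h
  · have : round u = 0 := by
      rw [round_eq, Int.floor_eq_zero_iff]
      constructor <;> simp <;> linarith
    simp [this, abs_of_nonneg h0]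
  · subst h
    have : round ((1:ℝ)/2) = 1 := by
      rw [round_eq, show ((1:ℝ)/2 + 1/2) = 1 by norm_num]
      exact_mod_cast Int.floor_one
    rw [this]; norm_num

lemma tri_high (u : ℝ) (h0 : 1/2 ≤ u) (h1 : u ≤ 1) : |u - round u| = 1 - u := by
  have : round u = 1 := by
    rw [round_eq]
    have h3 : (1:ℤ) ≤ ⌊u + 1/2⌋ := by
      rw [Int.le_floor]; push_cast; linarith
    have h2 : ⌊u + 1/2⌋ < 2 := by
      rw [Int.floor_lt]; push_cast; linarith
    omega
  rw [this]
  push_cast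
  rw [abs_of_nonpos (by linarith)]
  ring

theorem sheppard_general_two_sided
    (δ α : ℝ) (hδ : 0 < δ)
    (rd : ℝ → ℝ) (hrd_meas : Measurable rd)
    (hrd_mem : ∀ x : ℝ, ∃ z : ℤ, rd x = 2 * δ * z + α)
    (hrd_near : ∀ x : ℝ, ∀ z : ℤ, |rd x - x| ≤ |(2 * δ * z + α) - x|)
    (n : ℕ) (hn : 1 ≤ n) (a b : ℝ) (hab : a ≤ b) :
    |(∫ x in a..b, |rd x - x| ^ n) - ((b - a) / (n + 1)) * δ ^ n|
      ≤ (4 / (n + 1)) * δ ^ (n + 1) := by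
  have h2δ : (0:ℝ) < 2 * δ := by linarith
  have h2δ' : (2 * δ) ≠ 0 := ne_of_gt h2δ
  set f : ℝ → ℝ := fun x => |rd x - x| with hf_def
  -- distance formula
  have hdist : ∀ (x : ℝ) (z : ℤ), |(2 * δ * z + α) - x| = 2 * δ * |(x - α)/(2*δ) - z| := by
    intro x z
    have h : 2*δ*(z:ℝ) + α - x = (2*δ) * ((z:ℝ) - (x-α)/(2*δ)) := by field_simp; ring
    rw [h, abs_mul, abs_of_pos h2δ, abs_sub_comm]
  have hf_eq : ∀ x : ℝ, f x = 2 * δ * |(x - α)/(2*δ) - round ((x - α)/(2*δ))| := by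
    intro x
    apply le_antisymm
    · rw [← hdist x]
      exact hrd_near x _
    · obtain ⟨z, hz⟩ := hrd_mem x
      have : f x = |(2 * δ * z + α) - x| := by rw [hf_def]; simp only [hz]
      rw [this, hdist x]
      have := round_le ((x - α)/(2*δ)) z
      nlinarith
  have hf_nonneg : ∀ x, 0 ≤ f x := fun x => abs_nonneg _
  have hf_bound : ∀ x, f x ≤ δ := by
    intro x
    rw [hf_eq x]
    have := abs_sub_round ((x - α)/(2*δ))
    nlinarith
  have hf_meas : Measurable f := (hrd_meas.sub measurable_id).abs
  -- integrability
  have hint : ∀ p q : ℝ, IntervalIntegrable (fun x => f x ^ n) volume p q := by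
    intro p q
    apply IntervalIntegrable.mono_fun' (g := fun _ => δ ^ n) intervalIntegrable_const
    · exact (hf_meas.pow_const n).aestronglyMeasurable
    · filter_upwards with x
      rw [Real.norm_eq_abs, abs_of_nonneg (pow_nonneg (hf_nonneg x) n)]
      exact pow_le_pow_left₀ (hf_nonneg x) (hf_bound x) n
  -- periodicity
  have hper : Function.Periodic (fun x => f x ^ n) (2 * δ) := by
    intro x
    simp only
    rw [hf_eq (x + 2*δ), hf_eq x]
    have hu : (x + 2*δ - α)/(2*δ) = (x - α)/(2*δ) + 1 := by field_simp; ring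
    rw [hu, show ((1:ℝ) = ((1:ℤ):ℝ)) by norm_num, round_add_intCast]
    push_cast
    ring_nf
  set ψ : ℝ → ℝ := fun x => ∫ t in α..x, f t ^ n with hψ_def
  have hnp : (0:ℝ) < (n:ℝ) + 1 := by positivity
  -- explicit value on first half-period
  have comp1 : ∀ x ∈ Set.Icc α (α + δ), ψ x = (x - α)^(n+1) / ((n:ℝ)+1) := by
    intro x hx
    have hEq : Set.EqOn (fun t => f t ^ n) (fun t => (t - α)^n) (Set.uIcc α x) := by
      intro t ht
      rw [Set.uIcc_of_le hx.1] at ht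
      have h1 : α ≤ t := ht.1
      have h2 : t ≤ α + δ := le_trans ht.2 hx.2
      have hu0 : 0 ≤ (t - α)/(2*δ) := div_nonneg (by linarith) h2δ.le
      have hu1 : (t - α)/(2*δ) ≤ 1/2 := by rw [div_le_iff₀ h2δ]; linarith
      simp only
      rw [hf_eq t, tri_low _ hu0 hu1]
      rw [mul_div_cancel₀ _ h2δ']
    rw [hψ_def]
    simp only
    rw [intervalIntegral.integral_congr hEq,
      intervalIntegral.integral_comp_sub_right (fun s => s ^ n) α, sub_self,
      integral_pow]
    simp [zero_pow (Nat.succ_ne_zero n)]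
  have comp2 : ∀ x ∈ Set.Icc (α + δ) (α + 2*δ),
      ψ x = (2 * δ^(n+1) - (α + 2*δ - x)^(n+1)) / ((n:ℝ)+1) := by
    intro x hx
    have hαδ : α ≤ α + δ := by linarith
    have hsplit : ψ x = ψ (α + δ) + ∫ t in (α+δ)..x, f t ^ n :=
      (intervalIntegral.integral_add_adjacent_intervals (hint α (α+δ)) (hint (α+δ) x)).symm
    have hψ1 : ψ (α + δ) = δ^(n+1) / ((n:ℝ)+1) := by
      rw [comp1 (α + δ) ⟨hαδ, le_refl _⟩]; ring_nf
    have hEq : Set.EqOn (fun t => f t ^ n) (fun t => (α + 2*δ - t)^n) (Set.uIcc (α+δ) x) := by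
      intro t ht
      rw [Set.uIcc_of_le hx.1] at ht
      have h1 : α + δ ≤ t := ht.1
      have h2 : t ≤ α + 2*δ := le_trans ht.2 hx.2
      have hu0 : 1/2 ≤ (t - α)/(2*δ) := by rw [le_div_iff₀ h2δ]; linarith
      have hu1 : (t - α)/(2*δ) ≤ 1 := by rw [div_le_one h2δ]; linarith
      simp only
      rw [hf_eq t, tri_high _ hu0 hu1]
      field_simp
      ring
    have hI : ∫ t in (α+δ)..x, f t ^ n
        = (δ^(n+1) - (α + 2*δ - x)^(n+1)) / ((n:ℝ)+1) := by
      rw [intervalIntegral.integral_congr hEq,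
        intervalIntegral.integral_comp_sub_left (fun s => s ^ n) (α + 2*δ),
        integral_pow]
      have : α + 2*δ - (α + δ) = δ := by ring
      rw [this]
      try push_cast
      try ring
    rw [hsplit, hψ1, hI]
    ring
  -- Φ and its periodicity
  set Φ : ℝ → ℝ := fun x => ψ x - (x - α) * δ^n / ((n:ℝ)+1) with hΦ_def
  have hP : ψ (α + 2*δ) = 2 * δ^(n+1) / ((n:ℝ)+1) := by
    rw [comp2 (α + 2*δ) ⟨by linarith, le_refl _⟩]
    rw [show α + 2*δ - (α + 2*δ) = 0 by ring, zero_pow (Nat.succ_ne_zero n)]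
    ring
  have hΦper : Function.Periodic Φ (2 * δ) := by
    intro x
    have h1 : ψ (x + 2*δ) = ψ x + ∫ t in x..(x + 2*δ), f t ^ n :=
      (intervalIntegral.integral_add_adjacent_intervals (hint α x) (hint x (x + 2*δ))).symm
    have h2 : ∫ t in x..(x + 2*δ), f t ^ n = ∫ t in α..(α + 2*δ), f t ^ n :=
      hper.intervalIntegral_add_eq x α
    have h3 : (∫ t in α..(α + 2*δ), f t ^ n) = 2 * δ^(n+1) / ((n:ℝ)+1) := hP
    simp only [hΦ_def]
    rw [h1, h2, h3]
    have : δ^(n+1) = δ^n * δ := by rw [pow_succ]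
    rw [this]
    field_simp
    ring
  -- bound on Φ
  have keybound : ∀ x, |Φ x| ≤ δ^(n+1) / ((n:ℝ)+1) := by
    intro x
    obtain ⟨y, hy, hxy⟩ := hΦper.exists_mem_Ico h2δ x α
    rw [hxy]
    have habs : ∀ s : ℝ, 0 ≤ s → s ≤ δ → |(s^(n+1) - s * δ^n) / ((n:ℝ)+1)| ≤ δ^(n+1) / ((n:ℝ)+1) := by
      intro s hs0 hsδ
      rw [abs_div, abs_of_pos hnp]
      have hsn : s^n ≤ δ^n := pow_le_pow_left₀ hs0 hsδ n
      have h1 : s^(n+1) = s * s^n := by rw [pow_succ]; ring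
      have h2 : δ^(n+1) = δ * δ^n := by rw [pow_succ]; ring
      have hnum : |s^(n+1) - s * δ^n| ≤ δ^(n+1) := by
        rw [abs_le]
        constructor
        · nlinarith [pow_nonneg hs0 n, pow_nonneg hδ.le n]
        · nlinarith [pow_nonneg hs0 n, pow_nonneg hδ.le n]
      gcongr
    rcases le_or_gt y (α + δ) with hcase | hcase
    · have hψy := comp1 y ⟨hy.1, hcase⟩
      have : Φ y = ((y - α)^(n+1) - (y - α) * δ^n) / ((n:ℝ)+1) := by
        rw [hΦ_def]; simp only; rw [hψy]; ring
      rw [this]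
      exact habs (y - α) (by linarith [hy.1]) (by linarith)
    · have hψy := comp2 y ⟨hcase.le, (hy.2).le⟩
      set s := α + 2*δ - y with hs_def
      have hΦy : Φ y = (s * δ^n - s^(n+1)) / ((n:ℝ)+1) := by
        rw [hΦ_def]; simp only; rw [hψy]
        have hyα : y - α = 2*δ - s := by rw [hs_def]; ring
        rw [hyα]
        have h2 : δ^(n+1) = δ * δ^n := by rw [pow_succ]; ring
        rw [h2]
        ring
      rw [hΦy, show (s * δ^n - s^(n+1)) / ((n:ℝ)+1)
          = -((s^(n+1) - s * δ^n) / ((n:ℝ)+1)) by ring, abs_neg]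
      exact habs s (by linarith [hy.2]) (by linarith [hcase])
  -- conclude
  have hsub : (∫ x in a..b, f x ^ n) = ψ b - ψ a := by
    rw [hψ_def]
    simp only
    rw [← intervalIntegral.integral_interval_sub_left (hint α b) (hint α a)]
  have hmain : (∫ x in a..b, f x ^ n) - ((b - a) / ((n:ℝ)+1)) * δ^n = Φ b - Φ a := by
    rw [hsub, hΦ_def]
    ring
  calc |(∫ x in a..b, f x ^ n) - ((b - a) / ((n:ℝ)+1)) * δ^n|
      = |Φ b - Φ a| := by rw [hmain]
    _ ≤ |Φ b| + |Φ a| := abs_sub _ _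
    _ ≤ δ^(n+1) / ((n:ℝ)+1) + δ^(n+1) / ((n:ℝ)+1) := add_le_add (keybound b) (keybound a)
    _ ≤ (4 / ((n:ℝ)+1)) * δ^(n+1) := by
        rw [show (4 / ((n:ℝ)+1)) * δ^(n+1) = (4 * δ^(n+1)) / ((n:ℝ)+1) by ring,
          ← add_div]
        gcongr
        nlinarith [pow_nonneg hδ.le (n+1)]
end

section
/- For every integer k ≥ 1 and all real numbers a ≤ b, ∫_a^b A_k(x) dx ≤ (2/(k² + 3k + 2)) · (b − a) · h^k + (8/(k² + 3k + 2)) · h^{k+1}. -/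
open MeasureTheory

/-- Largest mesh point of `{h·z + α : z ∈ ℤ}` at or below `x`. -/
noncomputable def meshFloor (h α x : ℝ) : ℝ := α + h * ⌊(x - α) / h⌋

/-- Smallest mesh point of `{h·z + α : z ∈ ℤ}` strictly above `meshFloor h α x`. -/
noncomputable def meshCeil (h α x : ℝ) : ℝ := meshFloor h α x + h

/-- Relative position of `x` between consecutive mesh points. -/
noncomputable def meshFrac (h α x : ℝ) : ℝ := (x - meshFloor h α x) / h

/-- Expected `k`-th absolute error of stochastic rounding at `x`. -/
noncomputable def stochAbsErr (h α : ℝ) (k : ℕ) (x : ℝ) : ℝ :=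
  (x - meshFloor h α x) ^ k * (1 - meshFrac h α x)
    + (meshCeil h α x - x) ^ k * meshFrac h α x

variable {h α : ℝ} {k : ℕ}

lemma meshFloor_le (hh : 0 < h) (x : ℝ) : meshFloor h α x ≤ x := by
  have := Int.floor_le ((x - α) / h)
  have h2 : h * (⌊(x - α) / h⌋ : ℝ) ≤ x - α := by
    rw [mul_comm]
    calc (⌊(x - α) / h⌋ : ℝ) * h ≤ ((x - α)/h) * h := by nlinarith
    _ = x - α := div_mul_cancel₀ _ hh.ne'
  simp only [meshFloor]; linarith

lemma lt_meshCeil (hh : 0 < h) (x : ℝ) : x < meshCeil h α x := by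
  have := Int.lt_floor_add_one ((x - α) / h)
  have h2 : x - α < h * ((⌊(x - α) / h⌋ : ℝ) + 1) := by
    have : (x - α) / h < (⌊(x - α) / h⌋ : ℝ) + 1 := this
    calc x - α = ((x - α)/h) * h := (div_mul_cancel₀ _ hh.ne').symm
    _ < ((⌊(x - α) / h⌋ : ℝ) + 1) * h := by nlinarith
    _ = h * ((⌊(x - α) / h⌋ : ℝ) + 1) := mul_comm _ _
  simp only [meshCeil, meshFloor]; linarith

lemma meshFrac_nonneg (hh : 0 < h) (x : ℝ) : 0 ≤ meshFrac h α x :=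
  div_nonneg (by linarith [meshFloor_le (α := α) hh x]) hh.le

lemma meshFrac_lt_one (hh : 0 < h) (x : ℝ) : meshFrac h α x < 1 := by
  have := lt_meshCeil (α := α) hh x
  rw [meshCeil] at this
  rw [meshFrac, div_lt_one hh]; linarith

lemma stochAbsErr_nonneg (hh : 0 < h) (x : ℝ) : 0 ≤ stochAbsErr h α k x := by
  have h1 := meshFloor_le (α := α) hh x
  have h2 := lt_meshCeil (α := α) hh x
  have h3 := meshFrac_nonneg (α := α) hh x
  have h4 := meshFrac_lt_one (α := α) hh x
  have : (0:ℝ) ≤ (x - meshFloor h α x) ^ k := pow_nonneg (by linarith) k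
  have : (0:ℝ) ≤ (meshCeil h α x - x) ^ k := pow_nonneg (by linarith) k
  unfold stochAbsErr
  have q1 : (0:ℝ) ≤ (x - meshFloor h α x) ^ k * (1 - meshFrac h α x) :=
    mul_nonneg (pow_nonneg (by linarith) k) (by linarith)
  have q2 : (0:ℝ) ≤ (meshCeil h α x - x) ^ k * meshFrac h α x :=
    mul_nonneg (pow_nonneg (by linarith) k) h3
  linarith

lemma stochAbsErr_le (hh : 0 < h) (x : ℝ) : stochAbsErr h α k x ≤ 2 * h ^ k := by
  have h1 := meshFloor_le (α := α) hh x
  have h2 := lt_meshCeil (α := α) hh x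
  have h2' : meshCeil h α x = meshFloor h α x + h := rfl
  have h3 := meshFrac_nonneg (α := α) hh x
  have h4 := meshFrac_lt_one (α := α) hh x
  have b1 : (x - meshFloor h α x) ^ k ≤ h ^ k :=
    pow_le_pow_left₀ (by linarith) (by rw [h2'] at h2; linarith) k
  have b2 : (meshCeil h α x - x) ^ k ≤ h ^ k :=
    pow_le_pow_left₀ (by linarith) (by rw [h2']; linarith) k
  have p1 : (0:ℝ) ≤ (x - meshFloor h α x) ^ k := pow_nonneg (by linarith) k
  have p2 : (0:ℝ) ≤ (meshCeil h α x - x) ^ k := pow_nonneg (by linarith) k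
  have hhk : (0:ℝ) ≤ h ^ k := pow_nonneg hh.le k
  unfold stochAbsErr
  nlinarith [mul_le_mul_of_nonneg_right b1 (by linarith : (0:ℝ) ≤ 1 - meshFrac h α x),
    mul_le_mul_of_nonneg_right b2 h3,
    mul_le_mul_of_nonneg_left h4.le p2,
    mul_le_mul_of_nonneg_left (by linarith : 1 - meshFrac h α x ≤ 1) p1]

lemma measurable_stochAbsErr : Measurable (stochAbsErr h α k) := by
  have hm : Measurable (meshFloor h α) := by
    apply Measurable.add measurable_const
    apply Measurable.mul measurable_const
    exact Measurable.comp (by fun_prop) ((measurable_id.sub measurable_const).div_const h).floor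
  unfold stochAbsErr meshFrac meshCeil
  fun_prop

lemma stochAbsErr_intervalIntegrable (hh : 0 < h) (t s : ℝ) :
    IntervalIntegrable (stochAbsErr h α k) volume t s := by
  rw [intervalIntegrable_iff]
  have : IsFiniteMeasure (volume.restrict (Set.uIoc t s)) := by
    constructor
    rw [Measure.restrict_apply MeasurableSet.univ, Set.univ_inter]
    exact measure_Ioc_lt_top
  apply MeasureTheory.Integrable.mono' (integrable_const (2 * h ^ k))
    measurable_stochAbsErr.aestronglyMeasurable.restrict
  filter_upwards with x
  rw [Real.norm_eq_abs, abs_of_nonneg (stochAbsErr_nonneg hh x)]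
  exact stochAbsErr_le hh x

lemma meshFloor_add (hh : 0 < h) (x : ℝ) : meshFloor h α (x + h) = meshFloor h α x + h := by
  have : (x + h - α) / h = (x - α) / h + 1 := by field_simp; ring
  simp only [meshFloor, this, Int.floor_add_one]
  push_cast; ring

lemma stochAbsErr_periodic (hh : 0 < h) : Function.Periodic (stochAbsErr h α k) h := by
  intro x
  simp only [stochAbsErr, meshFrac, meshCeil, meshFloor_add hh]
  ring_nf

lemma meshFloor_eq_self_of_mem (hh : 0 < h) {x : ℝ} (hx : x ∈ Set.Ico α (α + h)) :
    meshFloor h α x = α := by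
  have h0 : (0:ℝ) ≤ (x - α) / h := div_nonneg (by linarith [hx.1]) hh.le
  have h1 : (x - α) / h < 1 := (div_lt_one hh).2 (by linarith [hx.2])
  have : ⌊(x - α) / h⌋ = 0 := Int.floor_eq_zero_iff.2 ⟨h0, h1⟩
  simp [meshFloor, this]

lemma int_aux (hh : 0 < h) (k : ℕ) :
    ∫ u in (0:ℝ)..h, u ^ k * (1 - u / h) = h ^ (k+1) / (((k:ℝ)+1) * ((k:ℝ)+2)) := by
  have heq : ∀ u : ℝ, u ^ k * (1 - u / h) = u ^ k - u ^ (k+1) * (1/h) := by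
    intro u; field_simp; ring
  simp_rw [heq]
  rw [intervalIntegral.integral_sub (g := fun u : ℝ => u ^ (k+1) * (1/h)) ((continuous_pow k).intervalIntegrable _ _)
    (((continuous_pow (k+1)).mul continuous_const).intervalIntegrable _ _),
    intervalIntegral.integral_mul_const, integral_pow, integral_pow]
  have hk1 : ((k:ℝ)+1) ≠ 0 := by positivity
  have hk2 : ((k:ℝ)+2) ≠ 0 := by positivity
  push_cast
  field_simp
  ring

lemma integral_reflect (hh : 0 < h) (k : ℕ) :
    ∫ u in (0:ℝ)..h, (h - u) ^ k * (u / h) = ∫ u in (0:ℝ)..h, u ^ k * (1 - u / h) := by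
  have := intervalIntegral.integral_comp_sub_left (a := (0:ℝ)) (b := h)
    (fun v => v ^ k * ((h - v) / h)) h
  simp only [sub_zero, sub_self] at this
  rw [show (fun u : ℝ => (h - u) ^ k * (u / h)) = fun u => (h-u) ^ k * ((h - (h-u)) / h) by
    funext u; ring_nf] at *
  calc ∫ u in (0:ℝ)..h, (h - u) ^ k * ((h - (h - u)) / h)
      = ∫ v in (0:ℝ)..h, v ^ k * ((h - v) / h) := this
    _ = ∫ u in (0:ℝ)..h, u ^ k * (1 - u / h) := by
        apply intervalIntegral.integral_congr
        intro u _
        field_simp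

lemma integral_period (hh : 0 < h) :
    ∫ x in α..α + h, stochAbsErr h α k x = 2 * h ^ (k+1) / (((k:ℝ)+1) * ((k:ℝ)+2)) := by
  have hcongr : ∫ x in α..α + h, stochAbsErr h α k x
      = ∫ x in α..α + h, ((x - α) ^ k * (1 - (x - α)/h) + (α + h - x) ^ k * ((x - α)/h)) := by
    apply intervalIntegral.integral_congr_ae
    have hne : ∀ᵐ x : ℝ, x ≠ α + h := by
      rw [ae_iff]
      simpa using measure_singleton (α + h)
    filter_upwards [hne] with x hx hmem
    rw [Set.uIoc_of_le (by linarith)] at hmem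
    have hx1 : α < x := hmem.1
    have hx2 : x < α + h := lt_of_le_of_ne hmem.2 hx
    have hfl : meshFloor h α x = α := meshFloor_eq_self_of_mem hh ⟨hx1.le, hx2⟩
    simp only [stochAbsErr, meshFrac, meshCeil, hfl]
  rw [hcongr]
  have c1 : Continuous fun x : ℝ => (x - α) ^ k * (1 - (x - α)/h) := by continuity
  have c2 : Continuous fun x : ℝ => (α + h - x) ^ k * ((x - α)/h) := by continuity
  rw [intervalIntegral.integral_add (c1.intervalIntegrable _ _) (c2.intervalIntegrable _ _)]
  have t1 : ∫ x in α..α + h, (x - α) ^ k * (1 - (x - α)/h)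
      = ∫ u in (0:ℝ)..h, u ^ k * (1 - u / h) := by
    have := intervalIntegral.integral_comp_sub_right (a := α) (b := α + h)
      (fun u => u ^ k * (1 - u / h)) α
    simpa using this
  have t2 : ∫ x in α..α + h, (α + h - x) ^ k * ((x - α)/h)
      = ∫ u in (0:ℝ)..h, (h - u) ^ k * (u / h) := by
    have := intervalIntegral.integral_comp_sub_right (a := α) (b := α + h)
      (fun u => (h - u) ^ k * (u / h)) α
    simp only [sub_self, add_sub_cancel_left] at this
    rw [← this]
    apply intervalIntegral.integral_congr
    intro x _
    ring_nf
  rw [t1, t2, integral_reflect hh, int_aux hh]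
  ring

theorem stoch_round_abs_error_int
    (h α : ℝ) (hh : 0 < h) (k : ℕ) (hk : 1 ≤ k) (a b : ℝ) (hab : a ≤ b) :
    (∫ x in a..b, stochAbsErr h α k x)
      ≤ (2 / ((k : ℝ) ^ 2 + 3 * k + 2)) * (b - a) * h ^ k
        + (8 / ((k : ℝ) ^ 2 + 3 * k + 2)) * h ^ (k + 1) := by
  set c : ℝ := meshFloor h α a with hc
  have hca : c ≤ a := meshFloor_le hh a
  have hach : a < c + h := by
    have := lt_meshCeil (α := α) hh a
    rwa [meshCeil] at this
  set N : ℕ := ⌊(b - c)/h⌋₊ + 1 with hN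
  have hbc : b ≤ c + (N : ℝ) * h := by
    have h1 : (b - c)/h < (N : ℝ) := by
      rw [hN]; push_cast
      exact Nat.lt_floor_add_one _
    have := (div_lt_iff₀ hh).1 h1
    linarith
  have hNle : (N : ℝ) ≤ (b - a)/h + 2 := by
    have h0 : (0:ℝ) ≤ (b - c)/h := div_nonneg (by linarith) hh.le
    have h1 : (⌊(b - c)/h⌋₊ : ℝ) ≤ (b - c)/h := Nat.floor_le h0
    have h2 : (b - c)/h ≤ (b - a)/h + 1 := by
      rw [div_add' _ _ _ hh.ne']
      gcongr
      linarith
    rw [hN]; push_cast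
    linarith
  have hint := fun t s => stochAbsErr_intervalIntegrable (α := α) (k := k) hh t s
  have hper := stochAbsErr_periodic (α := α) (k := k) hh
  have hmono : (∫ x in a..b, stochAbsErr h α k x)
      ≤ ∫ x in c..c + (N : ℝ) * h, stochAbsErr h α k x :=
    intervalIntegral.integral_mono_interval hca hab hbc
      (Filter.Eventually.of_forall fun x => stochAbsErr_nonneg hh x) (hint c _)
  have hz : ∫ x in c..c + (N : ℝ) * h, stochAbsErr h α k x
      = (N : ℝ) * ∫ x in α..α + h, stochAbsErr h α k x := by
    have := hper.intervalIntegral_add_zsmul_eq (N : ℤ) c hint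
    rw [hper.intervalIntegral_add_eq c α] at this
    simpa [zsmul_eq_mul] using this
  have hV := integral_period (α := α) (k := k) hh
  set D : ℝ := ((k:ℝ)+1) * ((k:ℝ)+2) with hD
  have hDpos : 0 < D := by positivity
  have hDeq : (k : ℝ) ^ 2 + 3 * k + 2 = D := by rw [hD]; ring
  have hVpos : 0 < 2 * h ^ (k+1) / D := by positivity
  have key : (∫ x in a..b, stochAbsErr h α k x) ≤ ((b - a)/h + 2) * (2 * h ^ (k+1) / D) := by
    calc (∫ x in a..b, stochAbsErr h α k x) ≤ (N : ℝ) * (2 * h ^ (k+1) / D) := by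
          rw [← hV]; rw [hz] at hmono; exact hmono
      _ ≤ ((b - a)/h + 2) * (2 * h ^ (k+1) / D) :=
          mul_le_mul_of_nonneg_right hNle hVpos.le
  rw [hDeq]
  have hexp : ((b - a)/h + 2) * (2 * h ^ (k+1) / D)
      = (2 / D) * (b - a) * h ^ k + (4 / D) * h ^ (k+1) := by
    have : h ^ (k+1) = h ^ k * h := pow_succ h k
    field_simp
    ring
  have hlast : (4 / D) * h ^ (k+1) ≤ (8 / D) * h ^ (k+1) := by
    gcongr
    norm_num
  linarith [key, hexp ▸ key]
end

section
/- Let X₁, …, X_n be independent, identically distributed copies of X and define the sample mean of the rounded data Z := (rd(X₁) + ⋯ + rd(X_n))/n. Then for every real t > δ, ℙ[|Z − E[X]| ≥ t] ≤ (1/n) · ((√(Var[X]) + δ)/(t − δ))². -/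
open MeasureTheory ProbabilityTheory

lemma sqrt_variance_eq_eLpNorm {Ω : Type*} [MeasurableSpace Ω] {P : Measure Ω}
    [IsProbabilityMeasure P] {f : Ω → ℝ} (hf : MemLp f 2 P) :
    Real.sqrt (variance f P) = (eLpNorm (fun ω => f ω - ∫ ω', f ω' ∂P) 2 P).toReal := by
  have h1 : evariance f P = eLpNorm (fun ω => f ω - ∫ ω', f ω' ∂P) 2 P ^ 2 := by
    rw [evariance, eLpNorm_eq_lintegral_rpow_enorm_toReal two_ne_zero ENNReal.ofNat_ne_top]
    rw [← ENNReal.rpow_natCast _ 2, ← ENNReal.rpow_mul]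
    norm_num
  have hfin : eLpNorm (fun ω => f ω - ∫ ω', f ω' ∂P) 2 P ≠ ⊤ :=
    (hf.sub (memLp_const _)).2.ne
  rw [variance, h1, ENNReal.toReal_pow, Real.sqrt_sq ENNReal.toReal_nonneg]

lemma sqrt_variance_add_le {Ω : Type*} [MeasurableSpace Ω] {P : Measure Ω}
    [IsProbabilityMeasure P] {f g : Ω → ℝ} (hf : MemLp f 2 P) (hg : MemLp g 2 P) :
    Real.sqrt (variance (fun ω => f ω + g ω) P)
      ≤ Real.sqrt (variance f P) + Real.sqrt (variance g P) := by
  have hfg : MemLp (fun ω => f ω + g ω) 2 P := hf.add hg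
  rw [sqrt_variance_eq_eLpNorm hfg, sqrt_variance_eq_eLpNorm hf, sqrt_variance_eq_eLpNorm hg]
  have hint : ∫ ω', (f ω' + g ω') ∂P = (∫ ω', f ω' ∂P) + ∫ ω', g ω' ∂P :=
    integral_add (hf.integrable one_le_two) (hg.integrable one_le_two)
  have hcent : (fun ω => (f ω + g ω) - ∫ ω', (f ω' + g ω') ∂P)
      = (fun ω => f ω - ∫ ω', f ω' ∂P) + (fun ω => g ω - ∫ ω', g ω' ∂P) := by
    funext ω; simp only [Pi.add_apply]; rw [hint]; ring
  rw [hcent]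
  have htri := eLpNorm_add_le (f := fun ω => f ω - ∫ ω', f ω' ∂P)
    (g := fun ω => g ω - ∫ ω', g ω' ∂P)
    ((hf.sub (memLp_const _)).aestronglyMeasurable)
    ((hg.sub (memLp_const _)).aestronglyMeasurable) one_le_two
  have hne : eLpNorm (fun ω => f ω - ∫ ω', f ω' ∂P) 2 P
      + eLpNorm (fun ω => g ω - ∫ ω', g ω' ∂P) 2 P ≠ ⊤ :=
    ENNReal.add_ne_top.2 ⟨(hf.sub (memLp_const _)).2.ne, (hg.sub (memLp_const _)).2.ne⟩
  calc (eLpNorm ((fun ω => f ω - ∫ ω', f ω' ∂P) + fun ω => g ω - ∫ ω', g ω' ∂P) 2 P).toReal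
      ≤ (eLpNorm (fun ω => f ω - ∫ ω', f ω' ∂P) 2 P
          + eLpNorm (fun ω => g ω - ∫ ω', g ω' ∂P) 2 P).toReal :=
        ENNReal.toReal_mono hne htri
    _ = _ := ENNReal.toReal_add (hf.sub (memLp_const _)).2.ne (hg.sub (memLp_const _)).2.ne

lemma sqrt_variance_le_of_bound {Ω : Type*} [MeasurableSpace Ω] {P : Measure Ω}
    [IsProbabilityMeasure P] {g : Ω → ℝ} (hg : AEStronglyMeasurable g P) {δ : ℝ} (hδ : 0 ≤ δ)
    (hb : ∀ ω, |g ω| ≤ δ) : Real.sqrt (variance g P) ≤ δ := by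
  have hgL : MemLp g 2 P := MemLp.of_bound hg δ (Filter.Eventually.of_forall fun ω => by
    simpa [Real.norm_eq_abs] using hb ω)
  have h1 : variance g P ≤ ∫ ω, (g ω) ^ 2 ∂P := variance_le_expectation_sq hg
  have h2 : ∫ ω, (g ω) ^ 2 ∂P ≤ ∫ _ω, δ ^ 2 ∂P := by
    refine integral_mono hgL.integrable_sq (integrable_const _) fun ω => ?_
    have h := hb ω
    nlinarith [abs_nonneg (g ω), sq_abs (g ω)]
  have h3 : ∫ _ω : Ω, δ ^ 2 ∂P = δ ^ 2 := by simp
  calc Real.sqrt (variance g P) ≤ Real.sqrt (δ ^ 2) :=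
        Real.sqrt_le_sqrt (by linarith)
    _ = δ := by rw [Real.sqrt_sq hδ]

theorem rounded_sample_mean_chebyshev
    {Ω : Type*} [MeasurableSpace Ω] (P : Measure Ω) [IsProbabilityMeasure P]
    (X : Ω → ℝ) (hX : Measurable X) (hX2 : MemLp X 2 P)
    (rd : ℝ → ℝ) (hrd : Measurable rd)
    (δ : ℝ) (hδ : 0 ≤ δ) (hbound : ∀ x : ℝ, |rd x - x| ≤ δ)
    (n : ℕ) (hn : 1 ≤ n)
    (Xi : Fin n → Ω → ℝ) (hXi_meas : ∀ i, Measurable (Xi i))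
    (h_indep : iIndepFun Xi P)
    (h_ident : ∀ i, IdentDistrib (Xi i) X P P)
    (t : ℝ) (ht : δ < t) :
    (P {ω | t ≤ |(∑ i, rd (Xi i ω)) / n - ∫ ω', X ω' ∂P|}).toReal
      ≤ (1 / n) * ((Real.sqrt (variance X P) + δ) / (t - δ)) ^ 2 := by
  have hn0 : (0:ℝ) < n := by exact_mod_cast hn
  have htδ : (0:ℝ) < t - δ := by linarith
  -- rounded variables
  set Y : Fin n → Ω → ℝ := fun i ω => rd (Xi i ω) with hY
  have hYmeas : ∀ i, Measurable (Y i) := fun i => hrd.comp (hXi_meas i)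
  have hXiL2 : ∀ i, MemLp (Xi i) 2 P := fun i => (h_ident i).symm.memLp_snd hX2
  have hDi : ∀ i, MemLp (fun ω => rd (Xi i ω) - Xi i ω) 2 P := fun i =>
    MemLp.of_bound ((hYmeas i).sub (hXi_meas i)).aestronglyMeasurable δ
      (Filter.Eventually.of_forall fun ω => by
        simpa [Real.norm_eq_abs] using hbound (Xi i ω))
  have hYL2 : ∀ i, MemLp (Y i) 2 P := fun i => by
    have h := (hXiL2 i).add (hDi i)
    have he : (Xi i + fun ω => rd (Xi i ω) - Xi i ω) = Y i := by funext ω; simp [hY]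
    rwa [he] at h
  -- the rounded version of X
  have hDX : MemLp (fun ω => rd (X ω) - X ω) 2 P :=
    MemLp.of_bound ((hrd.comp hX).sub hX).aestronglyMeasurable δ
      (Filter.Eventually.of_forall fun ω => by simpa [Real.norm_eq_abs] using hbound (X ω))
  have hYXL2 : MemLp (fun ω => rd (X ω)) 2 P := by
    have h := hX2.add hDX
    have he : (X + fun ω => rd (X ω) - X ω) = fun ω => rd (X ω) := by funext ω; simp
    rwa [he] at h
  set μY : ℝ := ∫ ω, rd (X ω) ∂P with hμY
  set μX : ℝ := ∫ ω, X ω ∂P with hμX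
  set vY : ℝ := variance (fun ω => rd (X ω)) P with hvYdef
  have hYident : ∀ i, IdentDistrib (Y i) (fun ω => rd (X ω)) P P := fun i =>
    (h_ident i).comp hrd
  -- sqrt of vY bound
  have hvY : Real.sqrt vY ≤ Real.sqrt (variance X P) + δ := by
    have heq : (fun ω => rd (X ω)) = fun ω => X ω + (rd (X ω) - X ω) := by
      funext ω; ring
    rw [hvYdef, heq]
    calc Real.sqrt (variance (fun ω => X ω + (rd (X ω) - X ω)) P)
        ≤ Real.sqrt (variance X P) + Real.sqrt (variance (fun ω => rd (X ω) - X ω) P) :=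
          sqrt_variance_add_le hX2 hDX
      _ ≤ Real.sqrt (variance X P) + δ := by
          gcongr
          exact sqrt_variance_le_of_bound hDX.aestronglyMeasurable hδ (fun ω => hbound (X ω))
  -- the sample mean
  set S : Ω → ℝ := fun ω => (∑ i, rd (Xi i ω)) / n with hS
  have hSeq : S = fun ω => (n:ℝ)⁻¹ * (∑ i, Y i) ω := by
    funext ω; simp [hS, Finset.sum_apply, div_eq_inv_mul, hY]
  have hsumL2 : MemLp (∑ i, Y i) 2 P := memLp_finset_sum' _ (fun i _ => hYL2 i)
  have hSL2 : MemLp S 2 P := by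
    rw [hSeq]; exact hsumL2.const_mul _
  -- expectation of S
  have hES : ∫ ω, S ω ∂P = μY := by
    rw [hSeq]
    rw [integral_const_mul]
    have : ∫ ω, (∑ i, Y i) ω ∂P = ∑ i, ∫ ω, Y i ω ∂P := by
      simp_rw [Finset.sum_apply]
      exact integral_finset_sum _ (fun i _ => (hYL2 i).integrable one_le_two)
    rw [this]
    have : ∀ i, ∫ ω, Y i ω ∂P = μY := fun i => (hYident i).integral_eq
    simp_rw [this, Finset.sum_const, Finset.card_univ, Fintype.card_fin, nsmul_eq_mul]
    field_simp
  -- variance of S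
  have hvarS : variance S P = vY / n := by
    rw [hSeq]
    rw [variance_const_mul]
    have hvsum : variance (∑ i, Y i) P = ∑ i, variance (Y i) P := by
      refine IndepFun.variance_sum (fun i _ => hYL2 i) ?_
      intro i _ j _ hij
      exact (h_indep.comp (fun _ => rd) (fun _ => hrd)).indepFun hij
    rw [hvsum]
    have : ∀ i, variance (Y i) P = vY := fun i => (hYident i).variance_eq
    simp_rw [this, Finset.sum_const, Finset.card_univ, Fintype.card_fin, nsmul_eq_mul]
    field_simp
  -- expectation difference
  have hμdiff : |μY - μX| ≤ δ := by
    have hsub : μY - μX = ∫ ω, (rd (X ω) - X ω) ∂P :=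
      (integral_sub (hYXL2.integrable one_le_two) (hX2.integrable one_le_two)).symm
    rw [hsub]
    have := norm_integral_le_of_norm_le_const (μ := P)
      (f := fun ω => rd (X ω) - X ω) (C := δ)
      (Filter.Eventually.of_forall fun ω => by simpa [Real.norm_eq_abs] using hbound (X ω))
    simpa [Real.norm_eq_abs] using this
  -- set inclusion
  have hincl : {ω | t ≤ |S ω - μX|} ⊆ {ω | t - δ ≤ |S ω - ∫ ω', S ω' ∂P|} := by
    intro ω hω
    simp only [Set.mem_setOf_eq] at hω ⊢
    rw [hES]
    have h1 : |S ω - μX| ≤ |S ω - μY| + |μY - μX| := abs_sub_le _ _ _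
    linarith
  -- Chebyshev
  have hcheb := meas_ge_le_variance_div_sq (μ := P) hSL2 htδ
  have hmono := measure_mono (μ := P) hincl
  have hfinal : (P {ω | t ≤ |S ω - μX|}).toReal ≤ variance S P / (t - δ) ^ 2 := by
    have h1 : P {ω | t ≤ |S ω - μX|} ≤ ENNReal.ofReal (variance S P / (t - δ) ^ 2) :=
      le_trans hmono hcheb
    calc (P {ω | t ≤ |S ω - μX|}).toReal
        ≤ (ENNReal.ofReal (variance S P / (t - δ) ^ 2)).toReal :=
          ENNReal.toReal_mono ENNReal.ofReal_ne_top h1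
      _ = variance S P / (t - δ) ^ 2 := ENNReal.toReal_ofReal
          (div_nonneg (variance_nonneg _ _) (sq_nonneg _))
  refine le_trans hfinal ?_
  rw [hvarS]
  have hvY2 : vY ≤ (Real.sqrt (variance X P) + δ) ^ 2 := by
    have h0 : vY = Real.sqrt vY ^ 2 := (Real.sq_sqrt (variance_nonneg _ _)).symm
    rw [h0]
    have hnn : 0 ≤ Real.sqrt vY := Real.sqrt_nonneg _
    nlinarith [Real.sqrt_nonneg (variance X P)]
  rw [div_pow, one_div, div_div]
  have heq2 : (↑n)⁻¹ * ((Real.sqrt (variance X P) + δ) ^ 2 / (t - δ) ^ 2)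
      = ((Real.sqrt (variance X P) + δ) ^ 2) / (↑n * (t - δ) ^ 2) := by
    have hne1 : (n:ℝ) ≠ 0 := hn0.ne'
    have hne2 : (t - δ) ≠ 0 := htδ.ne'
    field_simp
  rw [heq2]
  gcongr
end
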